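/- Let G be a torsion-free group and let g₁, ..., gₙ ∈ G. Then the product (1 - g₁)(1 - g₂)···(1 - gₙ) equals 0 in the integral group ring ℤ[G] if and only if gᵢ = 1 for at least one i. -/

import Mathlib

open MonoidAlgebra

lemma aux_one_sub_regular {G : Type*} [Group G] (hG : ∀ g : G, g ≠ 1 → ¬IsOfFinOrder g) {g : G}
    (hg : g ≠ 1) (x : MonoidAlgebra ℤ G)
    (h : (1 - MonoidAlgebra.of ℤ G g) * x = 0) : x = 0 := by
  have hmul : MonoidAlgebra.of ℤ G g * x = x := by
    rw [sub_mul, one_mul, sub_eq_zero] at h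
    exact h.symm
  by_contra hx
  obtain ⟨a, ha⟩ := Finsupp.ne_iff.mp (mt MonoidAlgebra.coeff_eq_zero.mp hx)
  simp only [Finsupp.coe_zero, Pi.zero_apply] at ha
  have key : ∀ n : ℕ, x.coeff ((g⁻¹) ^ n * a) ≠ 0 := by
    intro n
    induction n with
    | zero => simpa using ha
    | succ n ih =>
      have h2 : (MonoidAlgebra.of ℤ G g * x).coeff ((g⁻¹) ^ n * a) = x.coeff (g⁻¹ * ((g⁻¹) ^ n * a)) := by
        rw [MonoidAlgebra.of_apply, MonoidAlgebra.single_mul_apply, one_mul]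
      rw [hmul] at h2
      rw [pow_succ', mul_assoc, ← h2]
      exact ih
  have hinj : Function.Injective (fun n : ℕ => (g⁻¹) ^ n * a) := by
    have hfin : ¬ IsOfFinOrder (g⁻¹) := hG _ (by simpa using hg)
    have := injective_pow_iff_not_isOfFinOrder.mpr hfin
    exact fun m n hmn => this (mul_right_cancel hmn)
  have : (Set.range fun n : ℕ => (g⁻¹) ^ n * a).Infinite :=
    Set.infinite_range_of_injective hinj
  have hsub : (Set.range fun n : ℕ => (g⁻¹) ^ n * a) ⊆ ↑x.coeff.support := by
    rintro _ ⟨n, rfl⟩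
    simpa using key n
  exact (this.mono hsub) x.coeff.support.finite_toSet

theorem prod_one_sub_eq_zero_iff_torsionFree
    {G : Type*} [Group G] (hG : ∀ g : G, g ≠ 1 → ¬IsOfFinOrder g) (gs : List G) :
    ((gs.map fun g => (1 : MonoidAlgebra ℤ G) - MonoidAlgebra.of ℤ G g)).prod = 0 ↔
      ∃ g ∈ gs, g = 1 := by
  induction gs with
  | nil => simp
  | cons g gs ih =>
    simp only [List.map_cons, List.prod_cons, List.mem_cons]
    by_cases hg : g = 1
    · subst hg
      simp [← MonoidAlgebra.one_def]
    · constructor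
      · intro h
        have : (gs.map fun g => (1 : MonoidAlgebra ℤ G) - MonoidAlgebra.of ℤ G g).prod = 0 :=
          aux_one_sub_regular hG hg _ h
        obtain ⟨g', hg', hg1⟩ := ih.mp this
        exact ⟨g', Or.inr hg', hg1⟩
      · rintro ⟨g', hg', rfl⟩
        rcases hg' with rfl | hg'
        · exact absurd rfl hg
        · rw [ih.mpr ⟨_, hg', rfl⟩, mul_zero]
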